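/- arXiv:1805.02734 — 6 statements merged into one kernel-verified Lean document; each statement's English description precedes it below -/
import Mathlib

section
/- In any Lie ring, for every n ≥ 1 the identity [[a,_{2n} b], a] = [ Σ_{i=0}^{n-1} (-1)^i [[a,_{2n-1-i} b], [a,_i b]] , b ] holds, where [a,_i b] denotes the Engel bracket. -/
/-- The Engel bracket: `engel a b n = [a,_n b]`. -/
def engel {L : Type*} [LieRing L] (a b : L) : ℕ → L
  | 0 => a
  | n + 1 => ⁅engel a b n, b⁆

lemma engel_succ {L : Type*} [LieRing L] (a b : L) (n : ℕ) :
    engel a b (n + 1) = ⁅engel a b n, b⁆ := rfl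

lemma lie_step {L : Type*} [LieRing L] (x y b : L) :
    ⁅⁅x, b⁆, y⁆ = ⁅⁅x, y⁆, b⁆ - ⁅x, ⁅y, b⁆⁆ := by
  rw [lie_lie, ← lie_skew y b, lie_neg, ← lie_skew ⁅x, y⁆ b]
  abel

lemma engel_aux {L : Type*} [LieRing L] (a b : L) (n : ℕ) :
    ∀ d j, j + d + 1 = n →
      ⁅engel a b (2 * n - j), engel a b j⁆ =
        ⁅∑ i ∈ Finset.range (d + 1), ((-1 : ℤ) ^ i) •
            ⁅engel a b (2 * n - 1 - (j + i)), engel a b (j + i)⁆, b⁆ := by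
  intro d
  induction d with
  | zero =>
    intro j hj
    have h1 : 2 * n - j = (2 * n - 1 - j) + 1 := by omega
    have h2 : 2 * n - 1 - j = j + 1 := by omega
    rw [h1, engel_succ, Finset.sum_range_one]
    simp only [pow_zero, one_smul, add_zero]
    rw [lie_step, ← engel_succ, ← h2, lie_self, sub_zero]
  | succ d ih =>
    intro j hj
    have h1 : 2 * n - j = (2 * n - 1 - j) + 1 := by omega
    have h2 : 2 * n - 1 - j = 2 * n - (j + 1) := by omega
    have ih' : ⁅engel a b (2 * n - 1 - j), engel a b (j + 1)⁆ =
        ⁅∑ i ∈ Finset.range (d + 1), ((-1 : ℤ) ^ i) •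
            ⁅engel a b (2 * n - 1 - (j + 1 + i)), engel a b (j + 1 + i)⁆, b⁆ := by
      rw [h2]; exact ih (j + 1) (by omega)
    rw [h1, engel_succ, lie_step, ← engel_succ, ih', ← sub_lie]
    congr 1
    conv_rhs => rw [Finset.sum_range_succ']
    simp only [pow_zero, one_smul, add_zero]
    have hs : ∑ i ∈ Finset.range (d + 1), ((-1 : ℤ) ^ (i + 1)) •
          ⁅engel a b (2 * n - 1 - (j + (i + 1))), engel a b (j + (i + 1))⁆ =
        -∑ i ∈ Finset.range (d + 1), ((-1 : ℤ) ^ i) •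
            ⁅engel a b (2 * n - 1 - (j + 1 + i)), engel a b (j + 1 + i)⁆ := by
      rw [← Finset.sum_neg_distrib]
      apply Finset.sum_congr rfl
      intro i _
      have e1 : j + (i + 1) = j + 1 + i := by omega
      rw [e1, pow_succ, mul_neg_one, neg_smul]
    rw [hs]
    abel

theorem engel_identity {L : Type*} [LieRing L] (a b : L) (n : ℕ) (hn : 1 ≤ n) :
    ⁅engel a b (2 * n), a⁆ =
      ⁅∑ i ∈ Finset.range n, ((-1 : ℤ) ^ i) • ⁅engel a b (2 * n - 1 - i), engel a b i⁆, b⁆ := by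
  have h := engel_aux a b n (n - 1) 0 (by omega)
  have hn' : n - 1 + 1 = n := by omega
  simp only [Nat.sub_zero, zero_add, hn'] at h
  exact h
end

section
/- In any Lie ring, the identity [3[C₂,C₁] + 2[C₃,C₀], a] = [2[C₂,C₀,C₀] − [C₁,C₀,C₁], b] holds, where Cₙ = [a,_n b] is the Engel bracket and [x,y,z] denotes the left-normed bracket [[x,y],z]. -/
set_option maxHeartbeats 4000000
set_option maxRecDepth 100000

theorem I33_identity {L : Type*} [LieRing L] (a b : L) :
    ⁅(3 : ℤ) • ⁅engel a b 2, engel a b 1⁆ + (2 : ℤ) • ⁅engel a b 3, engel a b 0⁆, a⁆ =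
      ⁅(2 : ℤ) • ⁅⁅engel a b 2, engel a b 0⁆, engel a b 0⁆
        - ⁅⁅engel a b 1, engel a b 0⁆, engel a b 1⁆, b⁆ := by
  simp only [engel]
  simp only [lie_lie, lie_add, add_lie, lie_sub, sub_lie, lie_smul, smul_lie, lie_neg, neg_lie,
    lie_self, lie_zero, zero_lie, sub_zero, zero_sub, neg_neg]
  have hsk : ⁅b, a⁆ = -⁅a, b⁆ := by rw [← lie_skew]
  simp only [hsk, lie_neg, neg_neg]
  obtain ⟨c, hc⟩ : ∃ x : L, ⁅a, b⁆ = x := ⟨_, rfl⟩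
  rw [hc]
  have r1 : ∀ z : L, ⁅b, ⁅a, z⁆⁆ = ⁅a, ⁅b, z⁆⁆ - ⁅c, z⁆ := by
    intro z; rw [leibniz_lie, ← hc, ← lie_skew a b, neg_lie]; abel
  have r2 : ∀ z : L, ⁅c, ⁅a, z⁆⁆ = ⁅a, ⁅c, z⁆⁆ - ⁅⁅a, c⁆, z⁆ := by
    intro z; rw [leibniz_lie, ← lie_skew a c, neg_lie]; abel
  have r3 : ∀ z : L, ⁅c, ⁅b, z⁆⁆ = ⁅b, ⁅c, z⁆⁆ - ⁅⁅b, c⁆, z⁆ := by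
    intro z; rw [leibniz_lie, ← lie_skew b c, neg_lie]; abel
  have r4 : ∀ z : L, ⁅⁅a, c⁆, ⁅a, z⁆⁆ = ⁅a, ⁅⁅a, c⁆, z⁆⁆ - ⁅⁅a, ⁅a, c⁆⁆, z⁆ := by
    intro z; rw [leibniz_lie, ← lie_skew a ⁅a, c⁆, neg_lie]; abel
  have r5 : ∀ z : L, ⁅⁅a, c⁆, ⁅b, z⁆⁆ = ⁅b, ⁅⁅a, c⁆, z⁆⁆ - ⁅⁅b, ⁅a, c⁆⁆, z⁆ := by
    intro z; rw [leibniz_lie, ← lie_skew b ⁅a, c⁆, neg_lie]; abel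
  have r6 : ∀ z : L, ⁅⁅b, c⁆, ⁅a, z⁆⁆ = ⁅a, ⁅⁅b, c⁆, z⁆⁆ - ⁅⁅a, ⁅b, c⁆⁆, z⁆ := by
    intro z; rw [leibniz_lie, ← lie_skew a ⁅b, c⁆, neg_lie]; abel
  have r7 : ∀ z : L, ⁅⁅b, c⁆, ⁅b, z⁆⁆ = ⁅b, ⁅⁅b, c⁆, z⁆⁆ - ⁅⁅b, ⁅b, c⁆⁆, z⁆ := by
    intro z; rw [leibniz_lie, ← lie_skew b ⁅b, c⁆, neg_lie]; abel
  have s1 : ⁅c, b⁆ = -⁅b, c⁆ := by rw [← lie_skew]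
  have s2 : ⁅⁅a, c⁆, b⁆ = -⁅b, ⁅a, c⁆⁆ := by rw [← lie_skew]
  have s3 : ⁅⁅a, ⁅a, c⁆⁆, b⁆ = -⁅b, ⁅a, ⁅a, c⁆⁆⁆ := by rw [← lie_skew]
  have s4 : ⁅⁅b, c⁆, b⁆ = -⁅b, ⁅b, c⁆⁆ := by rw [← lie_skew]
  have s5 : ⁅⁅b, ⁅a, c⁆⁆, b⁆ = -⁅b, ⁅b, ⁅a, c⁆⁆⁆ := by rw [← lie_skew]
  simp only [r1, r2, r3, r4, r5, r6, r7, s1, s2, s3, s4, s5, lie_self, lie_zero, zero_lie, lie_sub, sub_lie, lie_neg,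
    neg_lie, sub_zero, zero_sub, neg_neg]
  have hg : ⁅b, ⁅a, c⁆⁆ = ⁅a, ⁅b, c⁆⁆ := by rw [r1, lie_self, sub_zero]
  have t1 : ⁅⁅a, ⁅b, c⁆⁆, c⁆ = ⁅a, ⁅⁅b, c⁆, c⁆⁆ + ⁅⁅a, c⁆, ⁅b, c⁆⁆ := by
    rw [lie_lie, ← lie_skew ⁅a, c⁆ ⁅b, c⁆]; abel
  have t2 : ⁅⁅a, ⁅b, c⁆⁆, c⁆ = ⁅b, ⁅⁅a, c⁆, c⁆⁆ - ⁅⁅a, c⁆, ⁅b, c⁆⁆ := by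
    rw [← hg, lie_lie]
  linear_combination (norm := module) (-5 : ℤ) • t1 - (5 : ℤ) • t2
end

section
/- In any Lie ring, the identity [2[C₅,C₁] + 5[C₄,C₂], a] = [2[C₄,C₁,C₀] + 3[C₃,C₂,C₀] − 2[C₃,C₁,C₁] + [C₂,C₁,C₂], b] holds, where Cₙ = [a,_n b] is the Engel bracket and [x,y,z] = [[x,y],z]. -/
set_option maxHeartbeats 0 in
theorem I36_identity {L : Type*} [LieRing L] (a b : L) :
    ⁅(2 : ℤ) • ⁅engel a b 5, engel a b 1⁆ + (5 : ℤ) • ⁅engel a b 4, engel a b 2⁆, a⁆ =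
      ⁅(2 : ℤ) • ⁅⁅engel a b 4, engel a b 1⁆, engel a b 0⁆
        + (3 : ℤ) • ⁅⁅engel a b 3, engel a b 2⁆, engel a b 0⁆
        - (2 : ℤ) • ⁅⁅engel a b 3, engel a b 1⁆, engel a b 1⁆
        + ⁅⁅engel a b 2, engel a b 1⁆, engel a b 2⁆, b⁆ := by
  have hba : ⁅b, a⁆ = -⁅a, b⁆ := neg_eq_iff_eq_neg.mp (lie_skew a b)
  have haa : ⁅a, a⁆ = (0 : L) := lie_self a
  have hbb : ⁅b, b⁆ = (0 : L) := lie_self b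
  have h1 := lie_skew (⁅a,b⁆ : L) ⁅a,⁅b,⁅b,⁅b,⁅b,⁅a,b⁆⁆⁆⁆⁆⁆
  have h2 := lie_skew (⁅a,b⁆ : L) ⁅b,⁅a,⁅b,⁅b,⁅b,⁅a,b⁆⁆⁆⁆⁆⁆
  have h3 := lie_skew (⁅a,b⁆ : L) ⁅b,⁅b,⁅a,⁅b,⁅b,⁅a,b⁆⁆⁆⁆⁆⁆
  have h4 := lie_skew (⁅a,b⁆ : L) ⁅b,⁅b,⁅b,⁅a,⁅b,⁅a,b⁆⁆⁆⁆⁆⁆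
  have h5 := lie_skew (⁅a,⁅a,b⁆⁆ : L) ⁅b,⁅b,⁅b,⁅b,⁅a,b⁆⁆⁆⁆⁆
  have h6 := lie_skew (⁅b,⁅a,b⁆⁆ : L) ⁅a,⁅b,⁅b,⁅b,⁅a,b⁆⁆⁆⁆⁆
  have h7 := lie_skew (⁅b,⁅a,b⁆⁆ : L) ⁅b,⁅a,⁅b,⁅b,⁅a,b⁆⁆⁆⁆⁆
  have h8 := lie_skew (⁅b,⁅a,b⁆⁆ : L) ⁅b,⁅b,⁅a,⁅b,⁅a,b⁆⁆⁆⁆⁆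
  have h9 := lie_skew (⁅b,⁅a,b⁆⁆ : L) ⁅b,⁅b,⁅b,⁅a,⁅a,b⁆⁆⁆⁆⁆
  have h10 := lie_skew (⁅a,⁅b,⁅a,b⁆⁆⁆ : L) ⁅b,⁅b,⁅b,⁅a,b⁆⁆⁆⁆
  have h11 := lie_skew (⁅b,⁅b,⁅a,b⁆⁆⁆ : L) ⁅a,⁅b,⁅b,⁅a,b⁆⁆⁆⁆
  simp only [engel, lie_lie, lie_add, add_lie, lie_sub, sub_lie, lie_smul, smul_lie,
    lie_neg, neg_lie, haa, hbb, hba, lie_zero, zero_lie, smul_neg, neg_neg, smul_zero,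
    neg_zero, sub_zero, zero_sub, add_zero, zero_add, smul_sub, smul_add, sub_neg_eq_add]
    at h1 h2 h3 h4 h5 h6 h7 h8 h9 h10 h11 ⊢
  linear_combination (norm := module) (9 : ℤ) • h1 + (-24 : ℤ) • h2 + (33 : ℤ) • h3
    + (-18 : ℤ) • h4 + (2 : ℤ) • h5 + (5 : ℤ) • h6 + (-16 : ℤ) • h7 + (29 : ℤ) • h8
    + (-20 : ℤ) • h9 + (3 : ℤ) • h10 + (-3 : ℤ) • h11
end

section
/- In any Lie ring with elements a, b and Cₙ the Engel bracket, if k > l+1 and k = m then [[[C_k, C_l], C_m], b] = 2[[C_{k+1}, C_l], C_m] + [[C_k, C_{l+1}], C_m] − [[C_{k+1}, C_k], C_l]. -/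
theorem expand_case_four {L : Type*} [LieRing L] (a b : L) (k l m : ℕ)
    (h1 : k > l + 1) (h2 : k = m) :
    ⁅⁅⁅engel a b k, engel a b l⁆, engel a b m⁆, b⁆ =
      (2 : ℤ) • ⁅⁅engel a b (k + 1), engel a b l⁆, engel a b m⁆
      + ⁅⁅engel a b k, engel a b (l + 1)⁆, engel a b m⁆
      - ⁅⁅engel a b (k + 1), engel a b k⁆, engel a b l⁆ := by
  subst h2
  show ⁅⁅⁅engel a b k, engel a b l⁆, engel a b k⁆, b⁆ =
      (2 : ℤ) • ⁅⁅⁅engel a b k, b⁆, engel a b l⁆, engel a b k⁆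
      + ⁅⁅engel a b k, ⁅engel a b l, b⁆⁆, engel a b k⁆
      - ⁅⁅⁅engel a b k, b⁆, engel a b k⁆, engel a b l⁆
  generalize engel a b k = x
  generalize engel a b l = y
  have hb : ∀ z : L, ⁅b, z⁆ = -⁅z, b⁆ := fun z => (neg_eq_iff_eq_neg.mpr (lie_skew z b).symm).symm
  have hyx : ⁅y, x⁆ = -⁅x, y⁆ := (neg_eq_iff_eq_neg.mpr (lie_skew x y).symm).symm
  simp only [lie_lie, two_zsmul, lie_sub, sub_lie, lie_add, add_lie, lie_neg, neg_lie,
    hb, hyx, lie_self, lie_zero, zero_lie, neg_neg, neg_zero]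
  abel
end

section
/- In any Lie ring, for every n ≥ 1 the identity [Σ_{k=0}^{⌊(n+1)/2⌋} (−1)^{n+1} α_{n+1−k,k} [C_{2n+1−k}, C_{n+k−1}], a] = [Σ_{i=0}^{n} Σ_{j=0}^{⌊i/2⌋} (−1)^{i+1} α_{i−j,j} [[C_{n+i−j}, C_{n+j−1}], C_{n−i}], b] holds, where Cₙ is the Engel bracket of a by b, α_{0,0} = 1, and α_{i,j} = 2·C(i+j−1,j) + C(i+j−2,j−1) − C(i+j−2,j−2) − 2·C(i+j−1,j−2) for (i,j) ≠ (0,0). -/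
/-- Binomial coefficient `C(n,k)` on integers, taken to be `0` when `k < 0` or `k > n`. -/
def ch (n k : ℤ) : ℤ := if k < 0 ∨ n < k then 0 else (n.toNat.choose k.toNat : ℤ)

/-- The coefficients `α_{i,j}`. -/
def alpha (i j : ℕ) : ℤ :=
  if i = 0 ∧ j = 0 then 1
  else 2 * ch ((i : ℤ) + j - 1) j + ch ((i : ℤ) + j - 2) ((j : ℤ) - 1)
    - ch ((i : ℤ) + j - 2) ((j : ℤ) - 2) - 2 * ch ((i : ℤ) + j - 1) ((j : ℤ) - 2)

lemma ch_pascal (n k : ℤ) (h : 1 ≤ n) : ch n k = ch (n-1) k + ch (n-1) (k-1) := by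
  unfold ch
  split_ifs with h1 h2 h3 h2 h3 h3 <;> try omega
  · -- k = n case
    have e1 : (n-1).toNat = (k-1).toNat := by omega
    have e2 : n.toNat = (k-1).toNat + 1 := by omega
    have e3 : k.toNat = (k-1).toNat + 1 := by omega
    rw [e1, e2, e3, Nat.choose_self, Nat.choose_self]
    simp
  · -- k = 0 case (k-1 < 0)
    have e1 : k.toNat = 0 := by omega
    rw [e1, Nat.choose_zero_right, Nat.choose_zero_right]
    simp
  · -- main Pascal case 1 ≤ k ≤ n-1
    have e2 : n.toNat = (n-1).toNat + 1 := by omega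
    have e3 : k.toNat = (k-1).toNat + 1 := by omega
    rw [e2, e3, Nat.choose_succ_succ]
    push_cast
    ring

lemma ch_symm (n k : ℤ) (h0 : 0 ≤ k) (h : k ≤ n) : ch n k = ch n (n - k) := by
  unfold ch
  split_ifs <;> try omega
  have e : (n - k).toNat = n.toNat - k.toNat := by omega
  rw [e, Nat.choose_symm (by omega)]

lemma alpha_pascal (p q : ℕ) (hp : 1 ≤ p) (hq : 1 ≤ q) (hpq : 3 ≤ p + q) :
    alpha p q = alpha (p-1) q + alpha p (q-1) := by
  unfold alpha
  have h1 : ¬(p = 0 ∧ q = 0) := by omega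
  have h2 : ¬(p - 1 = 0 ∧ q = 0) := by omega
  have h3 : ¬(p = 0 ∧ q - 1 = 0) := by omega
  rw [if_neg h1, if_neg h2, if_neg h3]
  have c1 : ((p-1 : ℕ) : ℤ) = (p : ℤ) - 1 := by push_cast [hp]; ring
  have c2 : ((q-1 : ℕ) : ℤ) = (q : ℤ) - 1 := by push_cast [hq]; ring
  rw [c1, c2]
  have N2 : (1:ℤ) ≤ (p:ℤ) + q - 1 := by push_cast; omega
  have N3 : (1:ℤ) ≤ (p:ℤ) + q - 2 := by push_cast; omega
  rw [ch_pascal ((p:ℤ)+q-1) q N2, ch_pascal ((p:ℤ)+q-2) ((q:ℤ)-1) N3,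
      ch_pascal ((p:ℤ)+q-2) ((q:ℤ)-2) N3, ch_pascal ((p:ℤ)+q-1) ((q:ℤ)-2) N2]
  ring_nf

lemma alpha_top (p : ℕ) (hp : 1 ≤ p) : alpha p (p+1) = 0 := by
  unfold alpha
  rw [if_neg (by omega)]
  have e1 : ((p:ℤ) + (p+1) - 1) = 2*p := by push_cast; ring
  have e2 : ((p:ℤ) + (p+1) - 2) = 2*p - 1 := by push_cast; ring
  have e3 : ((p:ℤ)+1) - 1 = (p:ℤ) := by ring
  have e4 : ((p:ℤ)+1) - 2 = (p:ℤ) - 1 := by ring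
  push_cast
  rw [e1, e2, e3, e4]
  have s1 : ch (2*p) ((p:ℤ)+1) = ch (2*p) ((p:ℤ)-1) := by
    rw [ch_symm (2*p) ((p:ℤ)+1) (by omega) (by omega)]
    norm_num
    congr 1; ring
  have s2 : ch (2*(p:ℤ)-1) p = ch (2*p-1) ((p:ℤ)-1) := by
    rw [ch_symm (2*(p:ℤ)-1) p (by omega) (by omega)]
    congr 1; ring
  rw [s1, s2]; ring

lemma alpha_zero_right (p : ℕ) (hp : 1 ≤ p) : alpha p 0 = 2 := by
  unfold alpha
  rw [if_neg (by omega)]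
  push_cast
  have : ch ((p:ℤ) + 0 - 1) 0 = 1 := by unfold ch; rw [if_neg (by omega)]; simp
  rw [this]
  have z1 : ch ((p:ℤ) + 0 - 2) (-1) = 0 := by unfold ch; rw [if_pos (by omega)]
  have z2 : ch ((p:ℤ) + 0 - 2) (-2) = 0 := by unfold ch; rw [if_pos (by omega)]
  have z3 : ch ((p:ℤ) + 0 - 1) (-2) = 0 := by unfold ch; rw [if_pos (by omega)]
  rw [z1, z2, z3]; ring

section LieStuff
variable {L : Type*} [LieRing L] (a b : L)

open Finset

/-- Aux: bracketing on the left as an AddMonoidHom. -/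
def lhom (y : L) : L →+ L := AddMonoidHom.mk' (fun x => ⁅x, y⁆) (fun p q => add_lie p q y)

lemma sum_lie' {ι : Type*} (s : Finset ι) (f : ι → L) (y : L) :
    ⁅∑ i ∈ s, f i, y⁆ = ∑ i ∈ s, ⁅f i, y⁆ := map_sum (lhom y) f s

lemma jac (x y z : L) : ⁅⁅x,z⁆,y⁆ = ⁅⁅x,y⁆,z⁆ + ⁅⁅y,z⁆,x⁆ := by
  have J := lie_jacobi x y z
  rw [← lie_skew z x, lie_neg] at J
  have hB : ⁅y,⁅x,z⁆⁆ = ⁅x,⁅y,z⁆⁆ + ⁅z,⁅x,y⁆⁆ := by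
    have h2 : ⁅y,⁅x,z⁆⁆ - (⁅x,⁅y,z⁆⁆ + ⁅z,⁅x,y⁆⁆)
        = -(⁅x,⁅y,z⁆⁆ + -⁅y,⁅x,z⁆⁆ + ⁅z,⁅x,y⁆⁆) := by abel
    rw [J, neg_zero] at h2
    exact sub_eq_zero.mp h2
  rw [lie_lie x z y, lie_lie x y z, lie_lie y z x, ← lie_skew z y, ← lie_skew z x,
      ← lie_skew y x, lie_neg, lie_neg, lie_neg, hB]
  abel

lemma bderiv (x y : L) : ⁅⁅x, y⁆, b⁆ = ⁅⁅x, b⁆, y⁆ + ⁅x, ⁅y, b⁆⁆ := by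
  rw [lie_lie, sub_eq_add_neg, lie_skew, add_comm]

lemma S_deriv (p q : ℕ) :
    ⁅⁅engel a b p, engel a b q⁆, b⁆
      = ⁅engel a b (p+1), engel a b q⁆ + ⁅engel a b p, engel a b (q+1)⁆ := by
  have h : ⁅⁅engel a b p, engel a b q⁆, b⁆
      = ⁅⁅engel a b p, b⁆, engel a b q⁆ + ⁅engel a b p, ⁅engel a b q, b⁆⁆ := by
    rw [lie_lie, sub_eq_add_neg, lie_skew, add_comm]
  simpa [engel] using h

/-- `U_i` -/
def UU (n i : ℕ) : L :=
  ∑ j ∈ Finset.range (i/2+1),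
    ((-1:ℤ)^(i+1) * alpha (i-j) j) • ⁅engel a b (n+i-j), engel a b (n+j-1)⁆


lemma core {L : Type*} [LieRing L] (T : ℕ → L) (i m : ℕ) (hm : 1 ≤ m) (hi : m + 1 ≤ i) :
    ∑ j ∈ range (m+1), alpha (i-j) j • T j + ∑ j ∈ range m, alpha (i-j) j • T (j+1)
      = ∑ j ∈ range (m+1), alpha (i+1-j) j • T j := by
  rw [Finset.sum_range_succ' (fun j => alpha (i+1-j) j • T j) m,
      Finset.sum_range_succ' (fun j => alpha (i-j) j • T j) m]
  have h0 : alpha (i+1-0) 0 • T 0 = alpha (i-0) 0 • T 0 := by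
    rw [alpha_zero_right _ (by omega), alpha_zero_right _ (by omega)]
  rw [h0, add_right_comm, add_left_inj, ← Finset.sum_add_distrib]
  refine Finset.sum_congr rfl fun j hj => ?_
  have hj' : j < m := Finset.mem_range.mp hj
  rw [← add_smul]
  congr 1
  have e1 : i + 1 - (j+1) = i - j := by omega
  have e2 : i - (j+1) = (i - j) - 1 := by omega
  rw [e1, e2]
  have := alpha_pascal (i-j) (j+1) (by omega) (by omega) (by omega)
  simpa using this.symm

lemma key (n i : ℕ) (hn : 1 ≤ n) (hi : 2 ≤ i) :
    ∑ j ∈ range (i/2+1), alpha (i-j) j •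
        (⁅engel a b (n+i+1-j), engel a b (n+j-1)⁆ + ⁅engel a b (n+i-j), engel a b (n+j)⁆)
      = ∑ j ∈ range ((i+1)/2+1), alpha (i+1-j) j • ⁅engel a b (n+i+1-j), engel a b (n+j-1)⁆ := by
  set T : ℕ → L := fun j => ⁅engel a b (n+i+1-j), engel a b (n+j-1)⁆ with hT
  have hsplit : ∀ j ∈ range (i/2+1), alpha (i-j) j •
        (⁅engel a b (n+i+1-j), engel a b (n+j-1)⁆ + ⁅engel a b (n+i-j), engel a b (n+j)⁆)
      = alpha (i-j) j • T j + alpha (i-j) j • ⁅engel a b (n+i-j), engel a b (n+j)⁆ := by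
    intro j hj; rw [smul_add]
  rw [Finset.sum_congr rfl hsplit, Finset.sum_add_distrib]
  obtain ⟨m, hm | hm⟩ := Nat.even_or_odd' i
  · -- i = 2*m
    have hm1 : 1 ≤ m := by omega
    have d1 : i/2 = m := by omega
    have d2 : (i+1)/2 = m := by omega
    rw [d1, d2]
    rw [Finset.sum_range_succ (fun j => alpha (i-j) j • ⁅engel a b (n+i-j), engel a b (n+j)⁆) m]
    have hzero : alpha (i-m) m • ⁅engel a b (n+i-m), engel a b (n+m)⁆ = 0 := by
      have : n + i - m = n + m := by omega
      rw [this, lie_self, smul_zero]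
    rw [hzero, add_zero]
    have hre : ∀ j ∈ range m, alpha (i-j) j • ⁅engel a b (n+i-j), engel a b (n+j)⁆
        = alpha (i-j) j • T (j+1) := by
      intro j hj
      have hj' : j < m := Finset.mem_range.mp hj
      have e1 : n + i + 1 - (j+1) = n + i - j := by omega
      have e2 : n + (j+1) - 1 = n + j := by omega
      simp only [hT, e1, e2]
    rw [Finset.sum_congr rfl hre]
    exact core T i m hm1 (by omega)
  · -- i = 2*m+1
    have hm1 : 1 ≤ m := by omega
    have d1 : i/2 = m := by omega
    have d2 : (i+1)/2 = m+1 := by omega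
    rw [d1, d2]
    rw [Finset.sum_range_succ (fun j => alpha (i+1-j) j • T j) (m+1)]
    rw [Finset.sum_range_succ (fun j => alpha (i-j) j • ⁅engel a b (n+i-j), engel a b (n+j)⁆) m]
    have hcoef : alpha (i+1-(m+1)) (m+1) = alpha (i-m) m := by
      have e1 : i + 1 - (m+1) = m+1 := by omega
      have e2 : i - m = m+1 := by omega
      rw [e1, e2]
      have := alpha_pascal (m+1) (m+1) (by omega) (by omega) (by omega)
      simpa [alpha_top m hm1] using this
    have hterm : alpha (i-m) m • ⁅engel a b (n+i-m), engel a b (n+m)⁆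
        = alpha (i+1-(m+1)) (m+1) • T (m+1) := by
      rw [hcoef]
      have e1 : n + i + 1 - (m+1) = n + i - m := by omega
      have e2 : n + (m+1) - 1 = n + m := by omega
      simp only [hT, e1, e2]
    rw [hterm, ← add_assoc, add_left_inj]
    have hre : ∀ j ∈ range m, alpha (i-j) j • ⁅engel a b (n+i-j), engel a b (n+j)⁆
        = alpha (i-j) j • T (j+1) := by
      intro j hj
      have hj' : j < m := Finset.mem_range.mp hj
      have e1 : n + i + 1 - (j+1) = n + i - j := by omega
      have e2 : n + (j+1) - 1 = n + j := by omega
      simp only [hT, e1, e2]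
    rw [Finset.sum_congr rfl hre]
    exact core T i m hm1 (by omega)

lemma UU_lie_b (n i : ℕ) (hn : 1 ≤ n) :
    ⁅UU a b n i, b⁆ = ∑ j ∈ Finset.range (i/2+1), ((-1:ℤ)^(i+1) * alpha (i-j) j) •
      (⁅engel a b (n+i+1-j), engel a b (n+j-1)⁆ + ⁅engel a b (n+i-j), engel a b (n+j)⁆) := by
  unfold UU
  rw [sum_lie']
  refine Finset.sum_congr rfl fun j hj => ?_
  have hj' : j ≤ i/2 := by have := Finset.mem_range.mp hj; omega
  rw [zsmul_lie, S_deriv]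
  have e1 : n + i - j + 1 = n + i + 1 - j := by omega
  have e2 : n + j - 1 + 1 = n + j := by omega
  rw [e1, e2]

lemma W_vanish (n i : ℕ) (hn : 1 ≤ n) (hi : 2 ≤ i) :
    ⁅UU a b n i, b⁆ + UU a b n (i+1) = 0 := by
  rw [UU_lie_b a b n i hn]
  have h1 : ∑ j ∈ Finset.range (i/2+1), ((-1:ℤ)^(i+1) * alpha (i-j) j) •
      (⁅engel a b (n+i+1-j), engel a b (n+j-1)⁆ + ⁅engel a b (n+i-j), engel a b (n+j)⁆)
      = ((-1:ℤ)^(i+1)) • ∑ j ∈ Finset.range (i/2+1), alpha (i-j) j •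
      (⁅engel a b (n+i+1-j), engel a b (n+j-1)⁆ + ⁅engel a b (n+i-j), engel a b (n+j)⁆) := by
    rw [Finset.smul_sum]
    exact Finset.sum_congr rfl fun j hj => mul_smul _ _ _
  have h2 : UU a b n (i+1) = ((-1:ℤ)^(i+1)) •
      (-∑ j ∈ Finset.range ((i+1)/2+1), alpha (i+1-j) j •
        ⁅engel a b (n+i+1-j), engel a b (n+j-1)⁆) := by
    unfold UU
    have step : ∀ j ∈ Finset.range ((i+1)/2+1),
        ((-1:ℤ)^(i+1+1) * alpha (i+1-j) j) • ⁅engel a b (n+(i+1)-j), engel a b (n+j-1)⁆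
        = ((-1:ℤ)^(i+1)) • (-(alpha (i+1-j) j • ⁅engel a b (n+i+1-j), engel a b (n+j-1)⁆)) := by
      intro j hj
      have e : n + (i+1) - j = n + i + 1 - j := by omega
      rw [e, pow_succ, mul_comm ((-1:ℤ)^(i+1)) (-1:ℤ), mul_assoc, mul_smul,
          mul_smul, neg_one_smul, smul_neg]
    rw [Finset.sum_congr rfl step, ← Finset.smul_sum, Finset.sum_neg_distrib]
  rw [h1, h2, ← smul_add, key a b n i hn hi, add_neg_cancel, smul_zero]

lemma UU0 (n : ℕ) : UU a b n 0 = -⁅engel a b n, engel a b (n-1)⁆ := by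
  unfold UU
  rw [show (0:ℕ)/2+1 = 1 from rfl, Finset.sum_range_one,
      show alpha (0-0) 0 = 1 from rfl]
  norm_num

lemma UU1 (n : ℕ) : UU a b n 1 = (2:ℤ) • ⁅engel a b (n+1), engel a b (n-1)⁆ := by
  unfold UU
  rw [show (1:ℕ)/2+1 = 1 from rfl, Finset.sum_range_one,
      show alpha (1-0) 0 = 2 by decide]
  norm_num

lemma UU2 (n : ℕ) : UU a b n 2 = (-2:ℤ) • ⁅engel a b (n+2), engel a b (n-1)⁆
    + (-3:ℤ) • ⁅engel a b (n+1), engel a b n⁆ := by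
  unfold UU
  rw [show (2:ℕ)/2+1 = 2 from rfl, Finset.sum_range_succ, Finset.sum_range_one,
      show alpha (2-0) 0 = 2 by decide, show alpha (2-1) 1 = 3 by decide,
      show n+2-1 = n+1 from rfl, show n+1-1 = n from rfl]
  norm_num

lemma W0 (n : ℕ) (hn : 1 ≤ n) :
    ⁅UU a b n 0, b⁆ + UU a b n 1 = ⁅engel a b (n+1), engel a b (n-1)⁆ := by
  rw [UU0, UU1, neg_lie, S_deriv]
  rw [show n - 1 + 1 = n by omega, lie_self, add_zero]
  module

lemma W1 (n : ℕ) (hn : 1 ≤ n) :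
    ⁅UU a b n 1, b⁆ + UU a b n 2 = -⁅engel a b (n+1), engel a b n⁆ := by
  rw [UU1, UU2, zsmul_lie, S_deriv]
  rw [show n - 1 + 1 = n by omega, show n+1+1 = n+2 from rfl]
  module

end LieStuff

theorem generalized_three_a_identity {L : Type*} [LieRing L] (a b : L) (n : ℕ) (hn : 1 ≤ n) :
    ⁅∑ k ∈ Finset.range ((n + 1) / 2 + 1),
        ((-1 : ℤ) ^ (n + 1) * alpha (n + 1 - k) k) •
          ⁅engel a b (2 * n + 1 - k), engel a b (n + k - 1)⁆, a⁆ =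
    ⁅∑ i ∈ Finset.range (n + 1), ∑ j ∈ Finset.range (i / 2 + 1),
        ((-1 : ℤ) ^ (i + 1) * alpha (i - j) j) •
          ⁅⁅engel a b (n + i - j), engel a b (n + j - 1)⁆, engel a b (n - i)⁆, b⁆ := by
  have hL : (∑ k ∈ Finset.range ((n + 1) / 2 + 1),
        ((-1 : ℤ) ^ (n + 1) * alpha (n + 1 - k) k) •
          ⁅engel a b (2 * n + 1 - k), engel a b (n + k - 1)⁆) = -UU a b n (n+1) := by
    unfold UU
    rw [← Finset.sum_neg_distrib]
    refine Finset.sum_congr rfl fun k hk => ?_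
    have e : n + (n+1) - k = 2*n+1-k := by omega
    have hc : ((-1:ℤ)^(n+1+1) * alpha (n+1-k) k) = -((-1:ℤ)^(n+1) * alpha (n+1-k) k) := by
      rw [pow_succ]; ring
    rw [e, hc, neg_smul, neg_neg]
  have hInner : ∀ i ∈ Finset.range (n+1), (∑ j ∈ Finset.range (i / 2 + 1),
        ((-1 : ℤ) ^ (i + 1) * alpha (i - j) j) •
          ⁅⁅engel a b (n + i - j), engel a b (n + j - 1)⁆, engel a b (n - i)⁆)
      = ⁅UU a b n i, engel a b (n-i)⁆ := by
    intro i hi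
    unfold UU
    rw [sum_lie']
    exact Finset.sum_congr rfl fun j hj => by rw [zsmul_lie]
  rw [hL, Finset.sum_congr rfl hInner, sum_lie']
  have hExp : ∀ i ∈ Finset.range (n+1), ⁅⁅UU a b n i, engel a b (n-i)⁆, b⁆
      = ⁅⁅UU a b n i, b⁆, engel a b (n-i)⁆ + ⁅UU a b n i, engel a b (n-i+1)⁆ := by
    intro i hi
    exact bderiv b (UU a b n i) (engel a b (n-i))
  rw [Finset.sum_congr rfl hExp, Finset.sum_add_distrib]
  have hB : ∑ i ∈ Finset.range (n+1), ⁅UU a b n i, engel a b (n-i+1)⁆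
      = (∑ i ∈ Finset.range (n+1), ⁅UU a b n (i+1), engel a b (n-i)⁆)
        - ⁅UU a b n (n+1), engel a b 0⁆ + ⁅UU a b n 0, engel a b (n+1)⁆ := by
    rw [Finset.sum_range_succ' (fun i => ⁅UU a b n i, engel a b (n-i+1)⁆) n]
    have h1 : ∀ i ∈ Finset.range n, ⁅UU a b n (i+1), engel a b (n-(i+1)+1)⁆
        = ⁅UU a b n (i+1), engel a b (n-i)⁆ := by
      intro i hi
      have hi' := Finset.mem_range.mp hi
      have e : n-(i+1)+1 = n-i := by omega
      rw [e]
    rw [Finset.sum_congr rfl h1,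
        Finset.sum_range_succ (fun i => ⁅UU a b n (i+1), engel a b (n-i)⁆) n,
        show n - n = 0 from by omega, show n - 0 + 1 = n+1 from by omega]
    abel
  rw [hB]
  have hAB : ∀ i ∈ Finset.range (n+1), ⁅UU a b n (i+1), engel a b (n-i)⁆
      = ⁅⁅UU a b n i, b⁆ + UU a b n (i+1), engel a b (n-i)⁆
        - ⁅⁅UU a b n i, b⁆, engel a b (n-i)⁆ := by
    intro i hi
    rw [add_lie]; abel
  have hW : ∑ i ∈ Finset.range (n+1), ⁅⁅UU a b n i, b⁆ + UU a b n (i+1), engel a b (n-i)⁆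
      = ⁅⁅engel a b (n+1), engel a b (n-1)⁆, engel a b n⁆
        - ⁅⁅engel a b (n+1), engel a b n⁆, engel a b (n-1)⁆ := by
    obtain ⟨N, hN⟩ : ∃ N, n = N + 1 := ⟨n-1, by omega⟩
    subst hN
    rw [Finset.sum_range_succ'
        (fun i => ⁅⁅UU a b (N+1) i, b⁆ + UU a b (N+1) (i+1), engel a b (N+1-i)⁆) (N+1),
      Finset.sum_range_succ'
        (fun i => ⁅⁅UU a b (N+1) (i+1), b⁆ + UU a b (N+1) (i+1+1), engel a b (N+1-(i+1))⁆) N]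
    have hz : ∀ i ∈ Finset.range N,
        ⁅⁅UU a b (N+1) (i+1+1), b⁆ + UU a b (N+1) (i+1+1+1), engel a b (N+1-(i+1+1))⁆ = 0 := by
      intro i hi
      rw [W_vanish a b (N+1) (i+2) (by omega) (by omega), zero_lie]
    rw [Finset.sum_eq_zero hz, zero_add]
    rw [show N+1-(0+1) = N from by omega, show N+1-0 = N+1 from by omega]
    rw [W1 a b (N+1) (by omega), W0 a b (N+1) (by omega), neg_lie,
        show N+1-1 = N from rfl]
    abel
  rw [Finset.sum_congr rfl hAB, Finset.sum_sub_distrib, hW, UU0,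
      jac (engel a b (n+1)) (engel a b n) (engel a b (n-1)), neg_lie, neg_lie,
      show engel a b 0 = a from rfl]
  abel
end

section
/- A word of the form a b^i a b^j a b^t (with i,j,t ≥ 0) in the alphabet {a,b} with a < b is a Lyndon word if and only if i ≤ j and i < t. -/
local notation:max "R" n:max => List.replicate n true

lemma lex_ft (A B : List Bool) : List.Lex (· < ·) (false :: A) (true :: B) :=
  .rel (by decide)

lemma lexL1 (m : ℕ) {A B : List Bool} (h : List.Lex (· < ·) A B) :
    List.Lex (· < ·) (R m ++ A) (R m ++ B) := by
  induction m with
  | zero => simpa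
  | succ n ih => simpa [List.replicate_succ] using List.Lex.cons (a := true) ih

lemma lex_false_rep (m : ℕ) (hm : 0 < m) (A B : List Bool) :
    List.Lex (· < ·) (false :: A) (R m ++ B) := by
  cases m with
  | zero => omega
  | succ n => simpa [List.replicate_succ] using lex_ft A _

lemma not_lex_prefix (A B : List Bool) : ¬ List.Lex (· < ·) (A ++ B) A := by
  induction A with
  | nil => simp
  | cons a l ih =>
      intro h
      cases h with
      | rel h => exact lt_irrefl a h
      | cons h => exact ih h

lemma not_lex_tf (m : ℕ) (A B : List Bool) :
    ¬ List.Lex (· < ·) (R m ++ true :: A) (R m ++ false :: B) := by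
  induction m with
  | zero =>
      intro h
      cases h with
      | rel h => exact absurd h (by decide)
  | succ n ih =>
      intro h
      simp only [List.replicate_succ, List.cons_append] at h
      cases h with
      | rel h => exact lt_irrefl true h
      | cons h => exact ih h

lemma drop_cons_rep (n m : ℕ) (X : List Bool) :
    (false :: (R n ++ X)).drop (m + 1) = R (n - m) ++ X.drop (m - n) := by
  simp [List.drop_append, List.drop_replicate]

lemma rep_split (n d : ℕ) : R (n + (d + 1)) = R n ++ (true :: R d) := by
  rw [List.replicate_add, List.replicate_succ]

/-- A word over `Bool` (with `false = a < true = b`) is a Lyndon word if it is nonempty and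
strictly smaller in lexicographic order than all of its proper nonempty suffixes. -/
def IsLyndon (w : List Bool) : Prop :=
  w ≠ [] ∧ ∀ i, 0 < i → i < w.length → List.Lex (· < ·) w (w.drop i)

theorem lyndon_abiabjabt (i j t : ℕ) :
    IsLyndon ([false] ++ List.replicate i true ++ [false] ++ List.replicate j true
      ++ [false] ++ List.replicate t true) ↔ i ≤ j ∧ i < t := by
  have hW : [false] ++ List.replicate i true ++ [false] ++ List.replicate j true
      ++ [false] ++ List.replicate t true
      = false :: (R i ++ (false :: (R j ++ false :: R t))) := by simp
  rw [hW]
  have hlen : (false :: (R i ++ (false :: (R j ++ false :: R t)))).length = i + j + t + 3 := by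
    simp; omega
  constructor
  · rintro ⟨-, h⟩
    have hit : i < t := by
      by_contra hc
      push_neg at hc
      obtain ⟨d, rfl⟩ : ∃ d, i = t + d := ⟨i - t, by omega⟩
      have h3 := h (t + d + j + 2) (by omega) (by omega)
      have heq : (false :: (R (t + d) ++ (false :: (R j ++ false :: R t)))).drop (t + d + j + 2)
          = false :: R t := by
        rw [drop_cons_rep]
        have : t + d + j + 1 - (t + d) = j + 1 := by omega
        rw [this]
        simp [List.drop_append, List.drop_replicate]
        omega
      rw [heq] at h3
      cases h3 with
      | rel h' => exact absurd h' (by decide)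
      | cons h' =>
          rw [List.replicate_add, List.append_assoc] at h'
          have : R t = R t ++ ([] : List Bool) := by simp
          rw [this] at h'
          exact not_lex_prefix (R t) _ (by
            have := h'
            simpa using this)
    refine ⟨?_, hit⟩
    by_contra hc
    push_neg at hc
    obtain ⟨d, rfl⟩ : ∃ d, i = j + (d + 1) := ⟨i - j - 1, by omega⟩
    have h2 := h (j + (d + 1) + 1) (by omega) (by omega)
    have heq : (false :: (R (j + (d + 1)) ++ (false :: (R j ++ false :: R t)))).drop
        (j + (d + 1) + 1) = false :: (R j ++ false :: R t) := by
      rw [drop_cons_rep]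
      simp
    rw [heq] at h2
    cases h2 with
    | rel h' => exact absurd h' (by decide)
    | cons h' =>
        rw [rep_split, List.append_assoc] at h'
        exact not_lex_tf j _ _ h'
  · rintro ⟨hij, hit⟩
    refine ⟨by simp, ?_⟩
    intro k hk0 hklen
    rw [hlen] at hklen
    obtain ⟨m, rfl⟩ : ∃ m, k = m + 1 := ⟨k - 1, by omega⟩
    rw [drop_cons_rep]
    rcases lt_or_ge m i with hmi | hmi
    · obtain ⟨e, he⟩ : ∃ e, i - m = e + 1 := ⟨i - m - 1, by omega⟩
      rw [he, List.replicate_succ]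
      exact lex_ft _ _
    · obtain ⟨p, rfl⟩ : ∃ p, m = i + p := ⟨m - i, by omega⟩
      have h1 : i - (i + p) = 0 := by omega
      have h2 : i + p - i = p := by omega
      rw [h1, h2, List.replicate_zero, List.nil_append]
      rcases Nat.eq_zero_or_pos p with rfl | hp
      · -- suffix is false :: (R j ++ false :: R t)
        rw [List.drop_zero]
        apply List.Lex.cons
        rcases eq_or_lt_of_le hij with rfl | hij'
        · apply lexL1
          apply List.Lex.cons
          obtain ⟨e, rfl⟩ : ∃ e, t = i + (e + 1) := ⟨t - i - 1, by omega⟩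
          rw [rep_split]
          exact lexL1 _ (lex_ft _ _)
        · obtain ⟨e, rfl⟩ : ∃ e, j = i + (e + 1) := ⟨j - i - 1, by omega⟩
          rw [rep_split, List.append_assoc, List.cons_append]
          exact lexL1 _ (lex_ft _ _)
      · obtain ⟨q, rfl⟩ : ∃ q, p = q + 1 := ⟨p - 1, by omega⟩
        rw [drop_cons_rep]
        rcases lt_or_ge q j with hqj | hqj
        · obtain ⟨e, he⟩ : ∃ e, j - q = e + 1 := ⟨j - q - 1, by omega⟩
          rw [he, List.replicate_succ]
          exact lex_ft _ _
        · obtain ⟨s, rfl⟩ : ∃ s, q = j + s := ⟨q - j, by omega⟩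
          have h3 : j - (j + s) = 0 := by omega
          have h4 : j + s - j = s := by omega
          rw [h3, h4, List.replicate_zero, List.nil_append]
          rcases Nat.eq_zero_or_pos s with rfl | hs
          · rw [List.drop_zero]
            apply List.Lex.cons
            obtain ⟨e, rfl⟩ : ∃ e, t = i + (e + 1) := ⟨t - i - 1, by omega⟩
            rw [rep_split]
            exact lexL1 _ (lex_ft _ _)
          · obtain ⟨s', rfl⟩ : ∃ s', s = s' + 1 := ⟨s - 1, by omega⟩
            rw [List.drop_succ_cons, List.drop_replicate]
            have : 0 < t - s' := by omega
            obtain ⟨e, he⟩ : ∃ e, t - s' = e + 1 := ⟨t - s' - 1, by omega⟩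
            rw [he, List.replicate_succ]
            exact lex_ft _ _
end
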